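/- Let f : [0,1] → GL_k(ℝ) be smooth (C¹), and let δ < 1/2. If |f(t)⁻¹ f'(t)| ≤ δ for all t ∈ [0,1] (in the Frobenius norm), then |f(0)⁻¹ f(1) − I_k| ≤ 2δ. -/
import Mathlib


open Set

/-- Frobenius norm of a real matrix. -/
noncomputable def frob {k l : ℕ} (M : Matrix (Fin k) (Fin l) ℝ) : ℝ :=
  Real.sqrt (∑ i, ∑ j, (M i j) ^ 2)

section aux

attribute [local instance] Matrix.frobeniusNormedAddCommGroup Matrix.frobeniusNormedRing
  Matrix.frobeniusNormedSpace

lemma frob_eq_norm {k l : ℕ} (M : Matrix (Fin k) (Fin l) ℝ) : frob M = ‖M‖ := by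
  rw [frob, Matrix.frobenius_norm_def, Real.sqrt_eq_rpow]
  congr 1
  congr 1 with i
  congr 1 with j
  rw [Real.norm_eq_abs, Real.rpow_two, sq_abs]

lemma exp_aux {δ : ℝ} (h0 : 0 ≤ δ) (h : δ < 1 / 2) : Real.exp δ - 1 ≤ 2 * δ := by
  have h1 : 1 - δ + 1 ≤ Real.exp (-δ) + 1 := by
    have := Real.add_one_le_exp (-δ); linarith
  have h2 : Real.exp (-δ) * Real.exp δ = 1 := by
    rw [← Real.exp_add]; simp
  nlinarith [Real.exp_pos δ, Real.exp_pos (-δ)]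

lemma matrix_derivative_control_aux (k : ℕ) (δ : ℝ) (hδ : δ < 1 / 2)
    (f f' : ℝ → Matrix (Fin k) (Fin k) ℝ)
    (hderiv : ∀ t ∈ Icc (0 : ℝ) 1, ∀ i j, HasDerivAt (fun s => f s i j) (f' t i j) t)
    (hinv : ∀ t ∈ Icc (0 : ℝ) 1, IsUnit (f t))
    (hbound : ∀ t ∈ Icc (0 : ℝ) 1, ‖(f t)⁻¹ * f' t‖ ≤ δ) :
    ‖(f 0)⁻¹ * f 1 - 1‖ ≤ 2 * δ := by
  have hδ0 : 0 ≤ δ := le_trans (norm_nonneg _) (hbound 0 ⟨le_refl _, zero_le_one⟩)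
  -- the continuous linear map `A ↦ (f 0)⁻¹ * Matrix.of A - 1` pieces
  set φ₀ : (Fin k → Fin k → ℝ) →ₗ[ℝ] Matrix (Fin k) (Fin k) ℝ :=
    { toFun := fun A => (f 0)⁻¹ * Matrix.of A
      map_add' := fun A B => by
        ext i j
        simp [Matrix.mul_apply, mul_add, Finset.sum_add_distrib]
      map_smul' := fun c A => by
        ext i j
        simp [Matrix.mul_apply, Finset.mul_sum]
        ring_nf
        simp [mul_comm, mul_left_comm] } with hφ₀
  set φ : (Fin k → Fin k → ℝ) →L[ℝ] Matrix (Fin k) (Fin k) ℝ :=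
    LinearMap.toContinuousLinearMap φ₀ with hφ
  set g : ℝ → Matrix (Fin k) (Fin k) ℝ := fun t => (f 0)⁻¹ * f t - 1 with hg
  have hFd : ∀ t ∈ Icc (0 : ℝ) 1,
      HasDerivAt (fun s => (fun i j => f s i j) : ℝ → Fin k → Fin k → ℝ)
        (fun i j => f' t i j) t := by
    intro t ht
    rw [hasDerivAt_pi]
    intro i
    rw [hasDerivAt_pi]
    intro j
    exact hderiv t ht i j
  have hgd : ∀ t ∈ Icc (0 : ℝ) 1, HasDerivAt g ((f 0)⁻¹ * f' t) t := by
    intro t ht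
    have h1 : HasDerivAt (fun s => φ (fun i j => f s i j)) (φ (fun i j => f' t i j)) t :=
      (φ.hasFDerivAt.comp_hasDerivAt t (hFd t ht))
    have h2 : (fun s => φ (fun i j => f s i j)) = fun s => (f 0)⁻¹ * f s := rfl
    have h3 : φ (fun i j => f' t i j) = (f 0)⁻¹ * f' t := rfl
    rw [h2, h3] at h1
    exact h1.sub_const 1
  have hgc : ContinuousOn g (Icc (0 : ℝ) 1) :=
    fun t ht => ((hgd t ht).continuousAt).continuousWithinAt
  have key : ∀ t ∈ Icc (0 : ℝ) 1, ‖g t‖ ≤ gronwallBound 0 δ δ (t - 0) := by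
    apply norm_le_gronwallBound_of_norm_deriv_right_le hgc
    · intro t ht
      exact ((hgd t (Ico_subset_Icc_self ht)).hasDerivWithinAt)
    · have : (f 0)⁻¹ * f 0 = 1 :=
        Matrix.nonsing_inv_mul _ ((Matrix.isUnit_iff_isUnit_det _).mp
          (hinv 0 ⟨le_refl _, zero_le_one⟩))
      simp [hg, this]
    · intro t ht
      have ht' := Ico_subset_Icc_self ht
      have hu : f t * (f t)⁻¹ = 1 :=
        Matrix.mul_nonsing_inv _ ((Matrix.isUnit_iff_isUnit_det _).mp (hinv t ht'))
      have hrw : (f 0)⁻¹ * f' t = g t * ((f t)⁻¹ * f' t) + ((f t)⁻¹ * f' t) := by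
        simp only [hg, Matrix.sub_mul, Matrix.one_mul]
        rw [Matrix.mul_assoc ((f 0)⁻¹) (f t), ← Matrix.mul_assoc (f t), hu, Matrix.one_mul]
        abel
      rw [hrw]
      calc ‖g t * ((f t)⁻¹ * f' t) + ((f t)⁻¹ * f' t)‖
          ≤ ‖g t * ((f t)⁻¹ * f' t)‖ + ‖(f t)⁻¹ * f' t‖ := norm_add_le _ _
        _ ≤ ‖g t‖ * ‖(f t)⁻¹ * f' t‖ + ‖(f t)⁻¹ * f' t‖ := by
            gcongr; exact norm_mul_le _ _
        _ ≤ ‖g t‖ * δ + δ := by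
            have := hbound t ht'
            have : 0 ≤ ‖g t‖ := norm_nonneg _
            gcongr <;> exact hbound t ht'
        _ = δ * ‖g t‖ + δ := by ring
  have h1 := key 1 ⟨zero_le_one, le_refl _⟩
  refine h1.trans ?_
  rcases eq_or_ne δ 0 with h | h
  · subst h; rw [gronwallBound_K0]; norm_num
  · rw [sub_zero, gronwallBound_of_K_ne_0 h]
    have : δ / δ = 1 := div_self h
    rw [this]
    have := exp_aux hδ0 hδ
    simp only [zero_mul, zero_add, one_mul, mul_one]
    linarith

end aux

/-- If `f : [0,1] → GL_k(ℝ)` is C¹ with `|f(t)⁻¹ f'(t)| ≤ δ < 1/2` on `[0,1]`,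
then `|f(0)⁻¹ f(1) − I| ≤ 2δ`. -/
theorem matrix_derivative_control (k : ℕ) (δ : ℝ) (hδ : δ < 1 / 2)
    (f f' : ℝ → Matrix (Fin k) (Fin k) ℝ)
    (hderiv : ∀ t ∈ Icc (0 : ℝ) 1, ∀ i j, HasDerivAt (fun s => f s i j) (f' t i j) t)
    (hcont : ∀ i j, ContinuousOn (fun s => f' s i j) (Icc (0 : ℝ) 1))
    (hinv : ∀ t ∈ Icc (0 : ℝ) 1, IsUnit (f t))
    (hbound : ∀ t ∈ Icc (0 : ℝ) 1, frob ((f t)⁻¹ * f' t) ≤ δ) :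
    frob ((f 0)⁻¹ * f 1 - 1) ≤ 2 * δ := by
  rw [frob_eq_norm]
  exact matrix_derivative_control_aux k δ hδ f f' hderiv hinv
    (fun t ht => by rw [← frob_eq_norm]; exact hbound t ht)
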